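/- Let U be a finite set of pairwise distinct unit vectors in ℝ² with pos(U) = ℝ². Then |U_□| ≤ 4, and |U_□| = 4 if and only if U = {u, −u, v, −v} for two linearly independent unit vectors u, v (i.e., U defines a parallelogram). -/

import Mathlib

open RealInnerProductSpace

noncomputable section

abbrev V2 : Type := EuclideanSpace ℝ (Fin 2)

/-- The positive hull: all nonnegative linear combinations of elements of `M`. -/
def pos {E : Type*} [AddCommMonoid E] [Module ℝ E] (M : Set E) : Set E :=
  {x | ∃ (s : Finset E) (c : E → ℝ),
    (↑s : Set E) ⊆ M ∧ (∀ v, 0 ≤ c v) ∧ x = ∑ v ∈ s, c v • v}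

/-- The set `U_□` of vectors of `U` not belonging to any positively spanning triple. -/
def Usq (U : Set V2) : Set V2 :=
  {u ∈ U | ¬ ∃ v ∈ U, ∃ w ∈ U, pos {u, v, w} = Set.univ}

/-- 2x2 determinant of coordinates -/
def det2 (x y : V2) : ℝ := x 0 * y 1 - x 1 * y 0

lemma det2_neg_left (x y : V2) : det2 (-x) y = - det2 x y := by
  simp [det2, PiLp.neg_apply]; ring

lemma det2_neg_right (x y : V2) : det2 x (-y) = - det2 x y := by
  simp [det2, PiLp.neg_apply]; ring

lemma sq_coords_of_norm {x : V2} (h : ‖x‖ = 1) : x 0 ^ 2 + x 1 ^ 2 = 1 := by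
  rw [EuclideanSpace.norm_eq, Fin.sum_univ_two] at h
  have h0 : (0:ℝ) ≤ ‖x 0‖^2 + ‖x 1‖^2 := by positivity
  have := Real.sq_sqrt h0
  rw [h] at this
  simpa [Real.norm_eq_abs, sq_abs] using this.symm

lemma norm_one_ne_zero {x : V2} (h : ‖x‖ = 1) : x ≠ 0 := by
  intro h0; rw [h0] at h; simp at h

/-- membership in pos of a triple from an explicit combination -/
lemma mem_pos3 {u v w x : V2} {a b c : ℝ} (ha : 0 ≤ a) (hb : 0 ≤ b) (hc : 0 ≤ c)
    (h : x = a • u + b • v + c • w) : x ∈ pos {u, v, w} := by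
  classical
  refine ⟨{u, v, w}, fun z => (if z = u then a else 0) + (if z = v then b else 0)
    + (if z = w then c else 0), by simp [Set.insert_subset_iff], ?_, ?_⟩
  · intro z; positivity
  · have key : ∀ (r : ℝ) (y z : V2), (if z = y then r else 0) • z
        = (if z = y then r • y else 0) := by
      intro r y z; split_ifs with h1 <;> simp [h1]
    have expand : ∀ z : V2, ((if z = u then a else 0) + (if z = v then b else 0)
        + (if z = w then c else 0)) • z
        = (if z = u then a • u else 0) + (if z = v then b • v else 0)
          + (if z = w then c • w else 0) := by
      intro z
      rw [add_smul, add_smul, key a u z, key b v z, key c w z]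
    rw [Finset.sum_congr rfl (fun z _ => expand z)]
    rw [Finset.sum_add_distrib, Finset.sum_add_distrib]
    rw [Finset.sum_ite_eq' _ u (fun z => a • u), Finset.sum_ite_eq' _ v (fun z => b • v),
      Finset.sum_ite_eq' _ w (fun z => c • w)]
    simp [h]

/-- decomposition in a basis given by nonzero determinant -/
lemma basisRep {v w : V2} (h : det2 v w ≠ 0) (x : V2) : ∃ α β : ℝ, x = α • v + β • w := by
  refine ⟨(x 0 * w 1 - x 1 * w 0) / det2 v w, (v 0 * x 1 - v 1 * x 0) / det2 v w, ?_⟩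
  have hD := h
  unfold det2 at hD ⊢
  ext i
  fin_cases i <;>
  · simp only [PiLp.add_apply, PiLp.smul_apply, smul_eq_mul, Fin.zero_eta, Fin.mk_one]
    rw [div_mul_eq_mul_div, div_mul_eq_mul_div, ← add_div, eq_div_iff hD]
    ring

lemma pos_triple_univ {u v w : V2} (hD : det2 v w ≠ 0) {p q : ℝ} (hp : 0 < p) (hq : 0 < q)
    (h : -u = p • v + q • w) : pos {u, v, w} = Set.univ := by
  rw [Set.eq_univ_iff_forall]
  intro x
  obtain ⟨α, β, hx⟩ := basisRep hD x
  set t := max 0 (max (-α/p) (-β/q)) with ht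
  have ht0 : 0 ≤ t := le_max_left _ _
  have htα : -α/p ≤ t := le_trans (le_max_left _ _) (le_max_right _ _)
  have htβ : -β/q ≤ t := le_trans (le_max_right _ _) (le_max_right _ _)
  have hb : 0 ≤ α + t * p := by
    have := (div_le_iff₀ hp).mp htα; linarith
  have hc : 0 ≤ β + t * q := by
    have := (div_le_iff₀ hq).mp htβ; linarith
  refine mem_pos3 ht0 hb hc ?_
  have hu : u = -(p • v + q • w) := by rw [← h, neg_neg]
  rw [hx, hu]
  match_scalars <;> ring

lemma not_mem_Usq {U : Set V2} {u v w : V2} (hv : v ∈ U) (hw : w ∈ U) (hD : det2 v w ≠ 0)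
    {p q : ℝ} (hp : 0 < p) (hq : 0 < q) (h : -u = p • v + q • w) : u ∉ Usq U := by
  rintro ⟨-, hno⟩
  exact hno ⟨v, hv, w, hw, pos_triple_univ hD hp hq h⟩

lemma pos_ne_univ_of_halfplane {M : Set V2} {d : V2} (hd : d ≠ 0)
    (h : ∀ m ∈ M, 0 ≤ ⟪d, m⟫) : pos M ≠ Set.univ := by
  intro he
  have hmem : -d ∈ pos M := by rw [he]; trivial
  obtain ⟨s, c, hs, hc, hsum⟩ := hmem
  have hin : ⟪d, -d⟫ = ∑ v ∈ s, c v * ⟪d, v⟫ := by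
    rw [hsum, inner_sum]
    exact Finset.sum_congr rfl fun v _ => real_inner_smul_right _ _ _
  have hge : 0 ≤ ⟪d, -d⟫ := by
    rw [hin]
    exact Finset.sum_nonneg fun v hv => mul_nonneg (hc v) (h v (hs hv))
  have hpos' : 0 < ⟪d, d⟫ := by
    rw [real_inner_self_eq_norm_sq]
    have h0 : 0 < ‖d‖ := norm_pos_iff.mpr hd
    positivity
  rw [inner_neg_right] at hge
  linarith

lemma scalar_unit {x y : V2} {r : ℝ} (hx : ‖x‖ = 1) (hy : ‖y‖ = 1) (h : x = r • y) :
    x = y ∨ x = -y := by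
  have hn : ‖x‖ = |r| * ‖y‖ := by rw [h, norm_smul]; simp [Real.norm_eq_abs]
  rw [hx, hy, mul_one] at hn
  rcases abs_eq (by norm_num : (0:ℝ) ≤ 1) |>.mp hn.symm with h1 | h1
  · left; rw [h, h1, one_smul]
  · right; rw [h, h1]; module

lemma parallel_unit {v w : V2} (hv : ‖v‖ = 1) (hw : ‖w‖ = 1) (hD : det2 v w = 0) :
    v = w ∨ v = -w := by
  have h1 := sq_coords_of_norm hv
  have h2 := sq_coords_of_norm hw
  have hd : v 0 * w 1 - v 1 * w 0 = 0 := hD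
  rcases mul_self_eq_one_iff.mp
      (by linear_combination (w 0^2 + w 1^2)*h1 + h2 - (v 0*w 1 - v 1*w 0)*hd :
        (v 0 * w 0 + v 1 * w 1) * (v 0 * w 0 + v 1 * w 1) = 1) with ht | ht
  · left
    have e : (v 0 - w 0) ^ 2 + (v 1 - w 1) ^ 2 = 0 := by linear_combination h1 + h2 - 2*ht
    have e0 : (v 0 - w 0) ^ 2 = 0 := by nlinarith [sq_nonneg (v 0 - w 0), sq_nonneg (v 1 - w 1)]
    have e1 : (v 1 - w 1) ^ 2 = 0 := by nlinarith [sq_nonneg (v 0 - w 0), sq_nonneg (v 1 - w 1)]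
    have e0' : v 0 = w 0 := by
      have := pow_eq_zero_iff (n := 2) (by norm_num) |>.mp e0; linarith
    have e1' : v 1 = w 1 := by
      have := pow_eq_zero_iff (n := 2) (by norm_num) |>.mp e1; linarith
    ext i; fin_cases i <;> assumption
  · right
    have e : (v 0 + w 0) ^ 2 + (v 1 + w 1) ^ 2 = 0 := by linear_combination h1 + h2 + 2*ht
    have e0 : (v 0 + w 0) ^ 2 = 0 := by nlinarith [sq_nonneg (v 0 + w 0), sq_nonneg (v 1 + w 1)]
    have e1 : (v 1 + w 1) ^ 2 = 0 := by nlinarith [sq_nonneg (v 0 + w 0), sq_nonneg (v 1 + w 1)]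
    have e0' : v 0 = -(w 0) := by
      have := pow_eq_zero_iff (n := 2) (by norm_num) |>.mp e0; linarith
    have e1' : v 1 = -(w 1) := by
      have := pow_eq_zero_iff (n := 2) (by norm_num) |>.mp e1; linarith
    ext i
    fin_cases i <;> simp only [PiLp.neg_apply] <;> assumption

/-- Carathéodory for cones in the plane: two generators suffice. -/
lemma carath (M : Set V2) (hM : M.Nonempty) :
    ∀ (n : ℕ) (s : Finset V2) (c : V2 → ℝ), s.card ≤ n → (∀ v, 0 ≤ c v) → (↑s : Set V2) ⊆ M →
    ∃ v ∈ M, ∃ w ∈ M, ∃ p q : ℝ, 0 ≤ p ∧ 0 ≤ q ∧ ∑ z ∈ s, c z • z = p • v + q • w := by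
  intro n
  induction n with
  | zero =>
    intro s c hcard _ _
    obtain ⟨v, hv⟩ := hM
    refine ⟨v, hv, v, hv, 0, 0, le_refl _, le_refl _, ?_⟩
    rw [Finset.card_eq_zero.mp (Nat.le_zero.mp hcard)]
    simp
  | succ n ih =>
    intro s c hcard hc hs
    classical
    by_cases hle : s.card ≤ n
    · exact ih s c hle hc hs
    by_cases h2 : s.card ≤ 2
    · interval_cases hsc : s.card
      · obtain ⟨v, hv⟩ := hM
        refine ⟨v, hv, v, hv, 0, 0, le_refl _, le_refl _, ?_⟩
        rw [Finset.card_eq_zero.mp hsc]; simp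
      · obtain ⟨v, hv⟩ := Finset.card_eq_one.mp hsc
        refine ⟨v, hs (by simp [hv]), v, hs (by simp [hv]), c v, 0, hc v, le_refl _, ?_⟩
        rw [hv]; simp
      · obtain ⟨v, w, hvw, hv⟩ := Finset.card_eq_two.mp hsc
        refine ⟨v, hs (by simp [hv]), w, hs (by simp [hv]), c v, c w, hc v, hc w, ?_⟩
        rw [hv, Finset.sum_pair hvw]
    · push_neg at h2
      obtain ⟨g0, hg0sum, x0, hx0s, hgx0⟩ :=
        Module.exists_nontrivial_relation_of_finrank_lt_card (R := ℝ) (t := s) (by simpa using h2)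
      have hexpos : ∃ g : V2 → ℝ, ∑ e ∈ s, g e • e = 0 ∧ ∃ x ∈ s, 0 < g x := by
        rcases lt_trichotomy (g0 x0) 0 with hneg | hzero | hpos
        · refine ⟨fun z => - g0 z, ?_, x0, hx0s, by simpa using hneg⟩
          simp only [neg_smul]
          rw [Finset.sum_neg_distrib, hg0sum, neg_zero]
        · exact absurd hzero hgx0
        · exact ⟨g0, hg0sum, x0, hx0s, hpos⟩
      obtain ⟨g, hgsum, x1, hx1s, hgx1⟩ := hexpos
      have hfilne : (s.filter (fun z => 0 < g z)).Nonempty :=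
        ⟨x1, Finset.mem_filter.mpr ⟨hx1s, hgx1⟩⟩
      obtain ⟨z0, hz0mem, hz0min⟩ := Finset.exists_min_image _ (fun z => c z / g z) hfilne
      rw [Finset.mem_filter] at hz0mem
      obtain ⟨hz0s, hgz0⟩ := hz0mem
      set t := c z0 / g z0 with htdef
      have ht0 : 0 ≤ t := div_nonneg (hc z0) (le_of_lt hgz0)
      set c' : V2 → ℝ := fun z => max (c z - t * g z) 0 with hc'def
      have hc'nonneg : ∀ v, 0 ≤ c' v := fun v => le_max_right _ _
      have hkey : ∀ z ∈ s, c' z = c z - t * g z := by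
        intro z hz
        rcases le_or_gt (g z) 0 with hgz | hgz
        · have : 0 ≤ c z - t * g z := by nlinarith [hc z]
          simp [hc'def, max_eq_left this]
        · have hmin := hz0min z (Finset.mem_filter.mpr ⟨hz, hgz⟩)
          have h1 : t * g z ≤ c z := by
            have := (le_div_iff₀ hgz).mp hmin
            linarith
          have : 0 ≤ c z - t * g z := by linarith
          simp [hc'def, max_eq_left this]
      have hz00 : c' z0 = 0 := by
        rw [hkey z0 hz0s, htdef]
        field_simp
        ring
      have hsumeq : ∑ z ∈ s.erase z0, c' z • z = ∑ z ∈ s, c z • z := by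
        have h1 : ∑ z ∈ s.erase z0, c' z • z + c' z0 • z0 = ∑ z ∈ s, c' z • z :=
          Finset.sum_erase_add s _ hz0s
        rw [hz00, zero_smul, add_zero] at h1
        rw [h1]
        have h2 : ∑ z ∈ s, c' z • z = ∑ z ∈ s, (c z • z - t • (g z • z)) :=
          Finset.sum_congr rfl fun z hz => by
            rw [hkey z hz, sub_smul, mul_smul]
        rw [h2, Finset.sum_sub_distrib, ← Finset.smul_sum, hgsum, smul_zero, sub_zero]
      have hcard' : (s.erase z0).card ≤ n := by
        rw [Finset.card_erase_of_mem hz0s]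
        omega
      have hsub' : (↑(s.erase z0) : Set V2) ⊆ M :=
        Set.Subset.trans (by exact_mod_cast Finset.coe_subset.mpr (Finset.erase_subset _ _)) hs
      obtain ⟨v, hv, w, hw, p, q, hp, hq, hres⟩ := ih (s.erase z0) c' hcard' hc'nonneg hsub'
      exact ⟨v, hv, w, hw, p, q, hp, hq, by rw [← hsumeq, hres]⟩

lemma mem_Usq_iff {U : Set V2} {u : V2} :
    u ∈ Usq U ↔ u ∈ U ∧ ¬ ∃ v ∈ U, ∃ w ∈ U, pos {u, v, w} = Set.univ := Iff.rfl

/-- determinants against a linear combination -/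
lemma det2_comb_left {a c x : V2} {α β : ℝ} (h : x = α • a + β • c) :
    det2 a x = β * det2 a c := by
  have h0 : x 0 = α * a 0 + β * c 0 := by
    rw [h]; simp [PiLp.add_apply, PiLp.smul_apply]
  have h1 : x 1 = α * a 1 + β * c 1 := by
    rw [h]; simp [PiLp.add_apply, PiLp.smul_apply]
  unfold det2
  rw [h0, h1]; ring

lemma det2_comb_right {a c x : V2} {α β : ℝ} (h : x = α • a + β • c) :
    det2 x c = α * det2 a c := by
  have h0 : x 0 = α * a 0 + β * c 0 := by
    rw [h]; simp [PiLp.add_apply, PiLp.smul_apply]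
  have h1 : x 1 = α * a 1 + β * c 1 := by
    rw [h]; simp [PiLp.add_apply, PiLp.smul_apply]
  unfold det2
  rw [h0, h1]; ring

/-- Every element of `U_□` has its antipode in `U`. -/
lemma neg_mem_of_Usq {U : Set V2} (hunit : ∀ v ∈ U, ‖v‖ = 1) (hpos : pos U = Set.univ)
    {u : V2} (hu : u ∈ Usq U) : -u ∈ U := by
  have huU : u ∈ U := hu.1
  have hun : ‖u‖ = 1 := hunit u huU
  have hmem : -u ∈ pos U := by rw [hpos]; trivial
  obtain ⟨s, c, hs, hc, hsum⟩ := hmem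
  obtain ⟨v, hv, w, hw, p, q, hp, hq, hres⟩ :=
    carath U ⟨u, huU⟩ s.card s c (le_refl _) hc hs
  have h : -u = p • v + q • w := by rw [hsum, hres]
  have hvn : ‖v‖ = 1 := hunit v hv
  have hwn : ‖w‖ = 1 := hunit w hw
  have hnun : ‖-u‖ = 1 := by rw [norm_neg]; exact hun
  -- helper for the one-term case
  have single : ∀ z : V2, z ∈ U → ‖z‖ = 1 → ∀ r : ℝ, 0 ≤ r → -u = r • z → -u ∈ U := by
    intro z hz hzn r hr hrz
    rcases scalar_unit hnun hzn hrz with h1 | h1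
    · rw [h1]; exact hz
    · exfalso
      have hzu : u = z := neg_inj.mp h1
      rw [← hzu] at hrz
      have hnorm : ‖-u‖ = |r| * ‖u‖ := by
        rw [hrz, norm_smul, Real.norm_eq_abs]
      rw [norm_neg, hun, mul_one] at hnorm
      have hr1 : r = 1 := by
        rcases abs_cases r with ⟨ha, _⟩ | ⟨ha, _⟩ <;> linarith
      rw [hr1, one_smul] at hrz
      have h2 : u + u = 0 := by
        have := congrArg (u + ·) hrz
        simpa using this.symm
      have h3 : (2:ℝ) • u = 0 := by rw [two_smul]; exact h2
      rcases smul_eq_zero.mp h3 with h4 | h4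
      · norm_num at h4
      · exact norm_one_ne_zero hun h4
  rcases eq_or_lt_of_le hp with hp0 | hp0
  · refine single w hw hwn q hq ?_
    rw [h, ← hp0, zero_smul, zero_add]
  rcases eq_or_lt_of_le hq with hq0 | hq0
  · refine single v hv hvn p hp ?_
    rw [h, ← hq0, zero_smul, add_zero]
  by_cases hD : det2 v w = 0
  · rcases parallel_unit hvn hwn hD with hvw | hvw
    · refine single v hv hvn (p + q) (by linarith) ?_
      rw [h, hvw]; module
    · rcases le_or_gt q p with hpq | hpq
      · refine single v hv hvn (p - q) (by linarith) ?_
        rw [h, hvw]; module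
      · refine single w hw hwn (q - p) (by linarith) ?_
        rw [h, hvw]; module
  · exact absurd hu (not_mem_Usq hv hw hD hp0 hq0 h)

/-- No three pairwise non-parallel elements of `U_□`. -/
lemma three_indep_absurd {U : Set V2} (hunit : ∀ v ∈ U, ‖v‖ = 1) (hpos : pos U = Set.univ)
    {u1 u2 u3 : V2} (h1 : u1 ∈ Usq U) (h2 : u2 ∈ Usq U) (h3 : u3 ∈ Usq U)
    (d12 : det2 u1 u2 ≠ 0) (d13 : det2 u1 u3 ≠ 0) (d23 : det2 u2 u3 ≠ 0) : False := by
  have hn1 : -u1 ∈ U := neg_mem_of_Usq hunit hpos h1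
  have hn2 : -u2 ∈ U := neg_mem_of_Usq hunit hpos h2
  have h1U : u1 ∈ U := h1.1
  have h2U : u2 ∈ U := h2.1
  obtain ⟨α, β, hrep⟩ := basisRep d12 (-u3)
  have hα : α ≠ 0 := by
    intro h0
    apply d23
    have : det2 u2 (-u3) = 0 := by
      have := det2_comb_left (a := u2) (c := u1) (α := β) (β := α) (x := -u3)
        (by rw [hrep]; module)
      rw [this, h0, zero_mul]
    rw [det2_neg_right] at this
    linarith [this]
  have hβ : β ≠ 0 := by
    intro h0
    apply d13
    have : det2 u1 (-u3) = 0 := by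
      rw [det2_comb_left hrep, h0, zero_mul]
    rw [det2_neg_right] at this
    linarith [this]
  have key : u3 ∉ Usq U := by
    rcases lt_or_gt_of_ne hα with hαn | hαp <;> rcases lt_or_gt_of_ne hβ with hβn | hβp
    · exact not_mem_Usq hn1 hn2
        (by rw [det2_neg_left, det2_neg_right, neg_neg]; exact d12)
        (by linarith : (0:ℝ) < -α) (by linarith : (0:ℝ) < -β)
        (by rw [hrep]; module)
    · exact not_mem_Usq hn1 h2U
        (by rw [det2_neg_left]; exact neg_ne_zero.mpr d12)
        (by linarith : (0:ℝ) < -α) hβp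
        (by rw [hrep]; module)
    · exact not_mem_Usq h1U hn2
        (by rw [det2_neg_right]; exact neg_ne_zero.mpr d12)
        hαp (by linarith : (0:ℝ) < -β)
        (by rw [hrep]; module)
    · exact not_mem_Usq h1U h2U d12 hαp hβp hrep
  exact key h3

/-- If `U_□` contains a non-parallel pair then it is contained in the 4 associated vectors. -/
lemma usq_subset {U : Set V2} (hunit : ∀ v ∈ U, ‖v‖ = 1) (hpos : pos U = Set.univ)
    {u1 u2 : V2} (h1 : u1 ∈ Usq U) (h2 : u2 ∈ Usq U) (h12 : det2 u1 u2 ≠ 0) :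
    Usq U ⊆ {u1, -u1, u2, -u2} := by
  intro u3 h3
  have h3n : ‖u3‖ = 1 := hunit u3 h3.1
  have h1n : ‖u1‖ = 1 := hunit u1 h1.1
  have h2n : ‖u2‖ = 1 := hunit u2 h2.1
  by_cases d13 : det2 u1 u3 = 0
  · have hD : det2 u3 u1 = 0 := by unfold det2 at d13 ⊢; linarith
    rcases parallel_unit h3n h1n hD with h | h
    · left; exact h
    · right; left; exact h
  by_cases d23 : det2 u2 u3 = 0
  · have hD : det2 u3 u2 = 0 := by unfold det2 at d23 ⊢; linarith
    rcases parallel_unit h3n h2n hD with h | h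
    · right; right; left; exact h
    · right; right; right; exact h
  exact absurd (three_indep_absurd hunit hpos h1 h2 h3 h12 d13 d23) id

lemma det2_self (x : V2) : det2 x x = 0 := by unfold det2; ring

lemma ncard4_le (a b c d : V2) : ({a, b, c, d} : Set V2).ncard ≤ 4 := by
  have h1 := Set.ncard_insert_le a ({b, c, d} : Set V2)
  have h2 := Set.ncard_insert_le b ({c, d} : Set V2)
  have h3 := Set.ncard_insert_le c ({d} : Set V2)
  have h4 : ({d} : Set V2).ncard = 1 := Set.ncard_singleton d
  omega

/-- kill one of `±u1` from `U_□` using an extra vector `w`. -/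
lemma kill_one {U : Set V2} {u1 u2 w : V2} (hw : w ∈ U) (hu2 : u2 ∈ U) (hnu2 : -u2 ∈ U)
    {α β : ℝ} (hα : α ≠ 0) (hβ : β ≠ 0) (h : w = α • u1 + β • u2) (hd : det2 u1 u2 ≠ 0) :
    u1 ∉ Usq U ∨ -u1 ∉ Usq U := by
  have hdw : det2 w u2 ≠ 0 := by
    rw [det2_comb_right h]
    exact mul_ne_zero hα hd
  have hdw' : det2 w (-u2) ≠ 0 := by rw [det2_neg_right]; exact neg_ne_zero.mpr hdw
  have hα' : -α ≠ 0 := neg_ne_zero.mpr hα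
  rcases lt_or_gt_of_ne hα with hαn | hαp <;> rcases lt_or_gt_of_ne hβ with hβn | hβp
  · -- α<0, β<0 : -u1 = (1/(-α))•w + ((-β)/(-α))•u2
    left
    refine not_mem_Usq hw hu2 hdw (one_div_pos.mpr (by linarith) : (0:ℝ) < 1/(-α))
      (div_pos (by linarith) (by linarith) : (0:ℝ) < (-β)/(-α)) ?_
    rw [h]
    match_scalars <;> field_simp <;> ring
  · -- α<0, β>0 : -u1 = (1/(-α))•w + (β/(-α))•(-u2)
    left
    refine not_mem_Usq hw hnu2 hdw' (one_div_pos.mpr (by linarith) : (0:ℝ) < 1/(-α))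
      (div_pos (by linarith) (by linarith) : (0:ℝ) < β/(-α)) ?_
    rw [h]
    match_scalars <;> field_simp <;> ring
  · -- α>0, β<0 : -(-u1) = (1/α)•w + ((-β)/α)•u2
    right
    refine not_mem_Usq hw hu2 hdw (one_div_pos.mpr (by linarith) : (0:ℝ) < 1/α)
      (div_pos (by linarith) (by linarith) : (0:ℝ) < (-β)/α) ?_
    rw [h]
    match_scalars <;> field_simp <;> ring
  · -- α>0, β>0 : -(-u1) = (1/α)•w + (β/α)•(-u2)
    right
    refine not_mem_Usq hw hnu2 hdw' (one_div_pos.mpr (by linarith) : (0:ℝ) < 1/α)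
      (div_pos (by linarith) (by linarith) : (0:ℝ) < β/α) ?_
    rw [h]
    match_scalars <;> field_simp <;> ring

/-- positive hull of a subset of `{x, -x, y}` misses a halfplane. -/
lemma pos_ne_univ_sub {x y : V2} (hd : det2 x y ≠ 0) {M : Set V2}
    (hM : M ⊆ {x, -x, y}) : pos M ≠ Set.univ := by
  set d : V2 := det2 x y • ((WithLp.equiv 2 (Fin 2 → ℝ)).symm ![ -x 1, x 0]) with hddef
  have hform : ∀ m : V2, ⟪d, m⟫ = det2 x y * det2 x m := by
    intro m
    simp only [hddef, PiLp.inner_apply, Fin.sum_univ_two, RCLike.inner_apply, conj_trivial,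
      PiLp.smul_apply, WithLp.equiv_symm_apply, PiLp.toLp_apply, Matrix.cons_val_zero, Matrix.cons_val_one,
      Matrix.head_cons, smul_eq_mul]
    unfold det2
    ring
  have hdne : d ≠ 0 := by
    intro h0
    have h1 : ⟪d, y⟫ = 0 := by rw [h0]; exact inner_zero_left y
    rw [hform y] at h1
    exact hd (by nlinarith [h1])
  refine pos_ne_univ_of_halfplane hdne ?_
  intro m hm
  rcases hM hm with h | h | h
  · rw [h, hform, det2_self, mul_zero]
  · rw [h, hform, det2_neg_right, det2_self, neg_zero, mul_zero]
  · rw [h, hform]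
    exact mul_self_nonneg _

lemma det2_swap (x y : V2) : det2 x y = - det2 y x := by unfold det2; ring

lemma ncard3_le (a b c : V2) : ({a, b, c} : Set V2).ncard ≤ 3 := by
  have h1 := Set.ncard_insert_le a ({b, c} : Set V2)
  have h2 := Set.ncard_insert_le b ({c} : Set V2)
  have h3 : ({c} : Set V2).ncard = 1 := Set.ncard_singleton c
  omega

lemma ncard4_eq {a b c d : V2} (hab : a ≠ b) (hac : a ≠ c) (had : a ≠ d)
    (hbc : b ≠ c) (hbd : b ≠ d) (hcd : c ≠ d) : ({a, b, c, d} : Set V2).ncard = 4 := by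
  rw [Set.ncard_insert_of_notMem (by simp [hab, hac, had]) (Set.toFinite _),
    Set.ncard_insert_of_notMem (by simp [hbc, hbd]) (Set.toFinite _),
    Set.ncard_pair hcd]

lemma parallelogram_facts {U : Set V2} {a c : V2} (ha : ‖a‖ = 1) (hc : ‖c‖ = 1)
    (hd : det2 a c ≠ 0) (hUeq : U = {a, -a, c, -c}) :
    Usq U = U ∧ (Usq U).ncard = 4 := by
  have ha0 : a ≠ 0 := norm_one_ne_zero ha
  have hc0' : c ≠ 0 := norm_one_ne_zero hc
  have hac : a ≠ c := by
    intro h; apply hd; rw [h]; exact det2_self c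
  have hanc : a ≠ -c := by
    intro h; apply hd; rw [h, det2_neg_left, det2_self, neg_zero]
  have hana : a ≠ -a := by
    intro h
    apply ha0
    have h2 : a + a = 0 := by nth_rewrite 1 [h]; simp
    have h3 : (2:ℝ) • a = 0 := by rw [two_smul]; exact h2
    rcases smul_eq_zero.mp h3 with h4 | h4
    · norm_num at h4
    · exact h4
  have hcnc : c ≠ -c := by
    intro h
    apply hc0'
    have h2 : c + c = 0 := by nth_rewrite 1 [h]; simp
    have h3 : (2:ℝ) • c = 0 := by rw [two_smul]; exact h2
    rcases smul_eq_zero.mp h3 with h4 | h4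
    · norm_num at h4
    · exact h4
  have hnac : -a ≠ c := fun h => hanc (by rw [← h, neg_neg])
  have hnanc : -a ≠ -c := fun h => hac (neg_inj.mp h)
  have husq_eq : Usq U = U := by
    apply Set.Subset.antisymm (fun x hx => hx.1)
    intro u hu
    refine ⟨hu, ?_⟩
    rintro ⟨v, hv, w, hw, hp⟩
    have hmem : ∀ m : V2, m ∈ ({u, v, w} : Set V2) → m ∈ ({a, -a, c, -c} : Set V2) := by
      intro m hm
      rcases hm with h | h | h
      · rw [h]; rw [hUeq] at hu; exact hu
      · rw [h]; rw [hUeq] at hv; exact hv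
      · rw [h]; rw [hUeq] at hw; exact hw
    have hmiss : ∃ z ∈ ({a, -a, c, -c} : Set V2), z ∉ ({u, v, w} : Set V2) := by
      by_contra hcon
      push_neg at hcon
      have hsubs : ({a, -a, c, -c} : Set V2) ⊆ {u, v, w} := hcon
      have h43 := Set.ncard_le_ncard hsubs (Set.toFinite _)
      have h4' := ncard4_eq hana hac hanc hnac hnanc hcnc
      have h3' := ncard3_le u v w
      omega
    obtain ⟨z, hz4, hz3⟩ := hmiss
    have hsubM : ∀ T : Set V2, (∀ m ∈ ({a, -a, c, -c} : Set V2), m ≠ z → m ∈ T) →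
        ({u, v, w} : Set V2) ⊆ T := by
      intro T hT m hm
      exact hT m (hmem m hm) (fun h => hz3 (h ▸ hm))
    rcases hz4 with hz | hz | hz | hz
    · -- a missing : {u,v,w} ⊆ {c, -c, -a}
      refine pos_ne_univ_sub (x := c) (y := -a)
        (by rw [det2_neg_right, det2_swap]; simpa using hd) ?_ hp
      apply hsubM
      intro m hm hmz
      rcases hm with h | h | h | h
      · exact absurd (h.trans hz.symm) hmz
      · right; right; rw [h]; rfl
      · left; exact h
      · right; left; exact h
    · -- -a missing : {u,v,w} ⊆ {c, -c, a}
      refine pos_ne_univ_sub (x := c) (y := a)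
        (by rw [det2_swap]; simpa using hd) ?_ hp
      apply hsubM
      intro m hm hmz
      rcases hm with h | h | h | h
      · right; right; rw [h]; rfl
      · exact absurd (h.trans hz.symm) hmz
      · left; exact h
      · right; left; exact h
    · -- c missing : {u,v,w} ⊆ {a, -a, -c}
      refine pos_ne_univ_sub (x := a) (y := -c)
        (by rw [det2_neg_right]; simpa using hd) ?_ hp
      apply hsubM
      intro m hm hmz
      rcases hm with h | h | h | h
      · left; exact h
      · right; left; exact h
      · exact absurd (h.trans hz.symm) hmz
      · right; right; rw [h]; rfl
    · -- -c missing : {u,v,w} ⊆ {a, -a, c}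
      refine pos_ne_univ_sub (x := a) (y := c) hd ?_ hp
      apply hsubM
      intro m hm hmz
      rcases hm with h | h | h | h
      · left; exact h
      · right; left; exact h
      · right; right; rw [h]; rfl
      · exact absurd (h.trans hz.symm) hmz
  refine ⟨husq_eq, ?_⟩
  rw [husq_eq, hUeq]
  exact ncard4_eq hana hac hanc hnac hnanc hcnc

theorem stmt4' (U : Set V2) (hfin : U.Finite) (hunit : ∀ v ∈ U, ‖v‖ = 1)
    (hpos : pos U = Set.univ) :
    (Usq U).ncard ≤ 4 ∧
    ((Usq U).ncard = 4 ↔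
      ∃ a c : V2, ‖a‖ = 1 ∧ ‖c‖ = 1 ∧ LinearIndependent ℝ ![a, c] ∧
        U = {a, -a, c, -c}) := by
  have husqU : Usq U ⊆ U := fun x hx => hx.1
  -- the bound, and the structure in the presence of an independent pair
  by_cases hex : ∃ u1, u1 ∈ Usq U ∧ ∃ u2, u2 ∈ Usq U ∧ det2 u1 u2 ≠ 0
  · obtain ⟨u1, h1, u2, h2, h12⟩ := hex
    have hsub := usq_subset hunit hpos h1 h2 h12
    have hle : (Usq U).ncard ≤ 4 :=
      (Set.ncard_le_ncard hsub (Set.toFinite _)).trans (ncard4_le _ _ _ _)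
    refine ⟨hle, ?_, ?_⟩
    · -- forward
      intro h4
      have heq : Usq U = {u1, -u1, u2, -u2} :=
        Set.eq_of_subset_of_ncard_le hsub (by rw [h4]; exact ncard4_le _ _ _ _)
          (Set.toFinite _)
      have h1U : u1 ∈ U := h1.1
      have h2U : u2 ∈ U := h2.1
      have h1n : ‖u1‖ = 1 := hunit u1 h1U
      have h2n : ‖u2‖ = 1 := hunit u2 h2U
      have hn2U : -u2 ∈ U := husqU (heq ▸ (by simp : -u2 ∈ ({u1, -u1, u2, -u2} : Set V2)))
      refine ⟨u1, u2, h1n, h2n, ?_, ?_⟩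
      · rw [linearIndependent_fin2]
        constructor
        · show ¬ _ = _
          simpa using norm_one_ne_zero h2n
        · intro r hr
          apply h12
          simp only [Matrix.cons_val_one, Matrix.head_cons, Matrix.cons_val_zero] at hr
          have hrep : u1 = r • u2 + (0:ℝ) • u2 := by rw [← hr]; module
          rw [det2_comb_right hrep, det2_self, mul_zero]
      · apply Set.Subset.antisymm
        · intro w hw
          obtain ⟨α, β, hrep⟩ := basisRep h12 w
          by_cases hβ : β = 0
          · rw [hβ, zero_smul, add_zero] at hrep
            rcases scalar_unit (hunit w hw) h1n hrep with h | h
            · simp [h]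
            · simp [h]
          by_cases hα : α = 0
          · rw [hα, zero_smul, zero_add] at hrep
            rcases scalar_unit (hunit w hw) h2n hrep with h | h
            · simp [h]
            · simp [h]
          exfalso
          rcases kill_one hw h2U hn2U hα hβ hrep h12 with hk | hk
          · exact hk (heq ▸ (by simp : u1 ∈ ({u1, -u1, u2, -u2} : Set V2)))
          · exact hk (heq ▸ (by simp : -u1 ∈ ({u1, -u1, u2, -u2} : Set V2)))
        · rw [← heq]; exact husqU
    · -- backward
      rintro ⟨a, c, ha, hc, hind, hUeq⟩
      rw [linearIndependent_fin2] at hind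
      obtain ⟨hc0, hnotmul⟩ := hind
      have hnot : ∀ r : ℝ, r • c ≠ a := by
        intro r hr
        exact hnotmul r (by simpa using hr)
      have hd : det2 a c ≠ 0 := by
        intro h0
        rcases parallel_unit ha hc h0 with h | h
        · exact hnot 1 (by rw [one_smul, h])
        · exact hnot (-1) (by rw [neg_one_smul]; exact h.symm)
      exact (parallelogram_facts ha hc hd hUeq).2
  · -- no independent pair in Usq U : small cardinality
    push_neg at hex
    have hsmall : (Usq U).ncard ≤ 2 := by
      rcases Set.eq_empty_or_nonempty (Usq U) with he | ⟨u1, hu1⟩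
      · rw [he]; simp
      · have hsub : Usq U ⊆ {u1, -u1} := by
          intro z hz
          have hpar := hex z hz u1 hu1
          rcases parallel_unit (hunit z hz.1) (hunit u1 hu1.1) hpar with h | h
          · left; exact h
          · right; exact h
        refine (Set.ncard_le_ncard hsub (Set.toFinite _)).trans ?_
        have := Set.ncard_insert_le u1 ({-u1} : Set V2)
        simpa using this
    refine ⟨by omega, ?_, ?_⟩
    · intro h4; omega
    · rintro ⟨a, c, ha, hc, hind, hUeq⟩
      exfalso
      rw [linearIndependent_fin2] at hind
      obtain ⟨hc0, hnotmul⟩ := hind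
      have hnot : ∀ r : ℝ, r • c ≠ a := by
        intro r hr
        exact hnotmul r (by simpa using hr)
      have hd : det2 a c ≠ 0 := by
        intro h0
        rcases parallel_unit ha hc h0 with h | h
        · exact hnot 1 (by rw [one_smul, h])
        · exact hnot (-1) (by rw [neg_one_smul]; exact h.symm)
      have husq_eq := (parallelogram_facts ha hc hd hUeq).1
      have haU : a ∈ U := by rw [hUeq]; simp
      have hcU : c ∈ U := by rw [hUeq]; simp
      have haUsq : a ∈ Usq U := by rw [husq_eq]; exact haU
      have hcUsq : c ∈ Usq U := by rw [husq_eq]; exact hcU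
      exact hd (hex a haUsq c hcUsq)

/-- `|U_□| ≤ 4`, with equality iff `U` defines a parallelogram. -/
theorem stmt4 (U : Set V2) (hfin : U.Finite) (hunit : ∀ v ∈ U, ‖v‖ = 1)
    (hpos : pos U = Set.univ) :
    (Usq U).ncard ≤ 4 ∧
    ((Usq U).ncard = 4 ↔
      ∃ a c : V2, ‖a‖ = 1 ∧ ‖c‖ = 1 ∧ LinearIndependent ℝ ![a, c] ∧
        U = {a, -a, c, -c}) := stmt4' U hfin hunit hpos
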